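/- arXiv:1510.01833 — 7 statements merged into one kernel-verified Lean document; each statement's English description precedes it below -/
import Mathlib

section
/- If two graphs H1 and H2 satisfy hom(G, H1) = hom(G, H2) for every connected graph G, then H1 and H2 are isomorphic. -/
structure LGraph where
  V : Type
  [fin : Fintype V]
  [dec : DecidableEq V]
  Adj : V → V → Prop
  symm : ∀ u v, Adj u v → Adj v u

attribute [instance] LGraph.fin LGraph.dec

/-- `f` is a graph homomorphism from `G` to `H`. -/
def LGraph.IsHom (G H : LGraph) (f : G.V → H.V) : Prop :=
  ∀ u v, G.Adj u v → H.Adj (f u) (f v)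

/-- The number of homomorphisms from `G` to `H`. -/
noncomputable def homCount (G H : LGraph) : ℕ :=
  Nat.card {f : G.V → H.V // G.IsHom H f}

/-- Tensor (categorical) product of graphs. -/
def tensor (A B : LGraph) : LGraph where
  V := A.V × B.V
  Adj p q := A.Adj p.1 q.1 ∧ B.Adj p.2 q.2
  symm _ _ h := ⟨A.symm _ _ h.1, B.symm _ _ h.2⟩

/-- Exponential graph `A ^ B`: vertices are functions `V(B) → V(A)`. -/
def expG (A B : LGraph) : LGraph where
  V := B.V → A.V
  Adj f g := ∀ u v, B.Adj u v → A.Adj (f u) (g v)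
  symm f g h u v e := A.symm _ _ (h v u (B.symm _ _ e))

/-- Disjoint union of graphs. -/
def disjUnion (A B : LGraph) : LGraph where
  V := A.V ⊕ B.V
  Adj u v := match u, v with
    | .inl a, .inl a' => A.Adj a a'
    | .inr b, .inr b' => B.Adj b b'
    | _, _ => False
  symm u v h := by
    cases u <;> cases v <;>
      first
        | exact A.symm _ _ h
        | exact B.symm _ _ h
        | exact h.elim

/-- Disjoint union of `k` copies of `H`. -/
def kCopies (k : ℕ) (H : LGraph) : LGraph where
  V := Fin k × H.V
  Adj p q := p.1 = q.1 ∧ H.Adj p.2 q.2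
  symm _ _ h := ⟨h.1.symm, H.symm _ _ h.2⟩

/-- Complete (loop-free) graph on `n` vertices. -/
def completeG (n : ℕ) : LGraph where
  V := Fin n
  Adj u v := u ≠ v
  symm _ _ h := h.symm

/-- Complete bipartite graph `K_{d,d}`. -/
def compBip (d : ℕ) : LGraph where
  V := Fin d ⊕ Fin d
  Adj u v := u.isLeft ≠ v.isLeft
  symm _ _ h := h.symm

/-- Two looped vertices with no other edges. -/
def l2 : LGraph where
  V := Fin 2
  Adj u v := u = v
  symm _ _ h := h.symm

/-- `G°`: add a loop at every vertex of `G`. -/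
def loopify (G : LGraph) : LGraph where
  V := G.V
  Adj u v := u = v ∨ G.Adj u v
  symm u v h := h.elim (fun e => Or.inl e.symm) (fun e => Or.inr (G.symm _ _ e))

/-- `l(H)`: induced subgraph of `H` on its looped vertices. -/
noncomputable def loopedPart (H : LGraph) : LGraph where
  V := {v : H.V // H.Adj v v}
  fin := Fintype.ofFinite _
  Adj u v := H.Adj u.1 v.1
  symm u v h := H.symm _ _ h

/-- A graph is bipartite if its vertices split into two parts with all edges between them. -/
def IsBipartite (G : LGraph) : Prop :=
  ∃ s : Set G.V, ∀ u v, G.Adj u v → (u ∈ s ↔ v ∉ s)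

/-- Graph isomorphism. -/
def Iso (A B : LGraph) : Prop :=
  ∃ e : A.V ≃ B.V, ∀ u v, A.Adj u v ↔ B.Adj (e u) (e v)

/-- `G` is `d`-regular (a loop contributes once to the degree). -/
def GRegular (G : LGraph) (d : ℕ) : Prop :=
  ∀ v : G.V, Nat.card {u : G.V // G.Adj v u} = d

/-- `G` is connected. -/
def GConnected (G : LGraph) : Prop :=
  Nonempty G.V ∧ ∀ u v : G.V, Relation.ReflTransGen G.Adj u v

/-- `H` has no clique of size `n`. -/
def CliqueFree (H : LGraph) (n : ℕ) : Prop :=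
  ¬ ∃ f : Fin n → H.V, Function.Injective f ∧ ∀ i j, i ≠ j → H.Adj (f i) (f j)

/-- `H` has no loops. -/
def LoopFree (H : LGraph) : Prop := ∀ v, ¬ H.Adj v v

/-- `H` is bipartite reducible: `hom(G,H)² ≤ hom(G × K₂, H)` for all `G`. -/
def BipRed (H : LGraph) : Prop :=
  ∀ G : LGraph, homCount G H ^ 2 ≤ homCount (tensor G (completeG 2)) H

instance setoidFinite (α : Type) [Finite α] : Finite (Setoid α) :=
  Finite.of_injective (fun P : Setoid α => (⇑P : α → α → Prop))
    (fun _ _ h => Setoid.ext fun a b => iff_of_eq (congrFun (congrFun h a) b))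

noncomputable instance setoidFintype (α : Type) [Finite α] : Fintype (Setoid α) :=
  Fintype.ofFinite _

noncomputable def injCount (G H : LGraph) : ℕ :=
  Nat.card {f : G.V → H.V // G.IsHom H f ∧ Function.Injective f}

/-- quotient graph -/
noncomputable def quotG (G : LGraph) (P : Setoid G.V) : LGraph where
  V := Quotient P
  fin := Fintype.ofFinite _
  dec := Classical.decEq _
  Adj x y := ∃ u v, Quotient.mk P u = x ∧ Quotient.mk P v = y ∧ G.Adj u v
  symm x y h := by obtain ⟨u, v, hu, hv, h⟩ := h; exact ⟨v, u, hv, hu, G.symm _ _ h⟩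

def eqSetoid (α : Type) : Setoid α := ⟨Eq, eq_equivalence⟩

/-- homs G→H correspond to pairs (setoid, injective hom on quotient). -/
noncomputable def homEquivSigma (G H : LGraph) :
    {f : G.V → H.V // G.IsHom H f} ≃
      Σ P : Setoid G.V, {g : (quotG G P).V → H.V //
        (quotG G P).IsHom H g ∧ Function.Injective g} := by
  classical
  let F : {f : G.V → H.V // G.IsHom H f} →
      Σ P : Setoid G.V, {g : (quotG G P).V → H.V //
        (quotG G P).IsHom H g ∧ Function.Injective g} :=
    fun f => ⟨Setoid.ker f.1, Quotient.lift f.1 (fun _ _ h => h), by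
      rintro x y ⟨u, v, rfl, rfl, hadj⟩
      exact f.2 u v hadj, by
      rintro x y
      induction x using Quotient.ind
      induction y using Quotient.ind
      intro h
      exact Quotient.sound h⟩
  let I : (Σ P : Setoid G.V, {g : (quotG G P).V → H.V //
        (quotG G P).IsHom H g ∧ Function.Injective g}) →
      {f : G.V → H.V // G.IsHom H f} :=
    fun x => ⟨x.2.1 ∘ Quotient.mk x.1, fun u v h => x.2.2.1 _ _ ⟨u, v, rfl, rfl, h⟩⟩
  have left : ∀ f, I (F f) = f := by
    intro f; apply Subtype.ext; funext u; rfl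
  have Iinj : Function.Injective I := by
    rintro ⟨P, g, hg⟩ ⟨Q, g', hg'⟩ h
    have h' : g ∘ Quotient.mk P = g' ∘ Quotient.mk Q := congrArg Subtype.val h
    have hPQ : P = Q := by
      apply Setoid.ext
      intro a b
      constructor
      · intro hab
        have : g' (Quotient.mk Q a) = g' (Quotient.mk Q b) :=
          ((congrFun h' a).symm.trans (congrArg g (Quotient.sound hab))).trans
            (congrFun h' b)
        exact Quotient.exact (hg'.2 this)
      · intro hab
        have : g (Quotient.mk P a) = g (Quotient.mk P b) :=
          ((congrFun h' a).trans (congrArg g' (Quotient.sound hab))).trans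
            (congrFun h' b).symm
        exact Quotient.exact (hg.2 this)
    subst hPQ
    have hgg : g = g' := by
      funext x
      induction x using Quotient.ind
      exact congrFun h' _
    subst hgg
    rfl
  have right : ∀ x, F (I x) = x := fun x => Iinj (left (I x))
  exact ⟨F, I, left, right⟩

lemma homCount_eq_sum (G H : LGraph) :
    homCount G H = ∑ P : Setoid G.V, injCount (quotG G P) H := by
  letI : ∀ P : Setoid G.V, Fintype {g : (quotG G P).V → H.V //
      (quotG G P).IsHom H g ∧ Function.Injective g} := fun P => Fintype.ofFinite _
  rw [homCount, Nat.card_congr (homEquivSigma G H), Nat.card_eq_fintype_card,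
    Fintype.card_sigma]
  exact Finset.sum_congr rfl fun P _ => (Nat.card_eq_fintype_card).symm

lemma card_quot_lt (G : LGraph) (P : Setoid G.V) (hP : P ≠ eqSetoid G.V) :
    Nat.card (quotG G P).V < Nat.card G.V := by
  classical
  have hex : ∃ a b : G.V, a ≠ b ∧ P a b := by
    by_contra hc
    push_neg at hc
    apply hP
    apply Setoid.ext
    intro a b
    exact ⟨fun h => by by_contra hne; exact (hc a b hne h).elim, fun h => h ▸ P.refl a⟩
  obtain ⟨a, b, hne, hab⟩ := hex
  have hsurj : Function.Surjective (Quotient.mk P) := Quotient.mk_surjective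
  have hninj : ¬ Function.Injective (Quotient.mk P) := by
    intro hinj
    exact hne (hinj (Quotient.sound hab))
  rw [Nat.card_eq_fintype_card, Nat.card_eq_fintype_card]
  exact Fintype.card_lt_of_surjective_not_injective _ hsurj hninj

lemma injCount_quot_eq (G H : LGraph) :
    injCount (quotG G (eqSetoid G.V)) H = injCount G H := by
  apply Nat.card_congr
  refine ⟨fun g => ⟨g.1 ∘ Quotient.mk _, fun u v h => g.2.1 _ _ ⟨u, v, rfl, rfl, h⟩,
    fun u v h => ?_⟩,
    fun f => ⟨Quotient.lift f.1 (fun a b (h : a = b) => by rw [h]), ?_, ?_⟩, ?_, ?_⟩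
  · exact Quotient.exact (g.2.2 h)
  · rintro x y ⟨u, v, rfl, rfl, hadj⟩
    exact f.2.1 u v hadj
  · intro x y
    induction x using Quotient.ind
    induction y using Quotient.ind
    intro h
    exact congrArg _ (f.2.2 h)
  · intro g
    apply Subtype.ext
    funext x
    induction x using Quotient.ind
    rfl
  · intro f
    apply Subtype.ext
    funext u
    rfl

/-- induced subgraph -/
noncomputable def induced (G : LGraph) (s : Set G.V) : LGraph where
  V := {v // v ∈ s}
  fin := Fintype.ofFinite _
  dec := Classical.decEq _
  Adj u v := G.Adj u.1 v.1
  symm _ _ h := G.symm _ _ h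

/-- split hom counting along a set with no crossing edges -/
lemma homCount_split (G H : LGraph) (s : Set G.V)
    (hcl : ∀ u v, G.Adj u v → (u ∈ s ↔ v ∈ s)) :
    homCount G H = homCount (induced G s) H * homCount (induced G sᶜ) H := by
  classical
  rw [homCount, homCount, homCount, ← Nat.card_prod]
  apply Nat.card_congr
  refine ⟨fun f => (⟨fun v => f.1 v.1, fun u v h => f.2 _ _ h⟩,
      ⟨fun v => f.1 v.1, fun u v h => f.2 _ _ h⟩),
    fun p => ⟨fun v => if hv : v ∈ s then p.1.1 ⟨v, hv⟩ else p.2.1 ⟨v, hv⟩, ?_⟩, ?_, ?_⟩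
  · intro u v h
    by_cases hu : u ∈ s
    · have hv : v ∈ s := (hcl u v h).mp hu
      simp only [dif_pos hu, dif_pos hv]
      exact p.1.2 ⟨u, hu⟩ ⟨v, hv⟩ h
    · have hv : v ∉ s := fun hv => hu ((hcl u v h).mpr hv)
      simp only [dif_neg hu, dif_neg hv]
      exact p.2.2 ⟨u, hu⟩ ⟨v, hv⟩ h
  · intro f
    apply Subtype.ext
    funext v
    by_cases hv : v ∈ s
    · exact dif_pos hv
    · exact dif_neg hv
  · intro p
    refine Prod.ext ?_ ?_ <;> apply Subtype.ext <;> funext v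
    · exact dif_pos v.2
    · exact dif_neg v.2

lemma nat_card_subtype_lt {α : Type} [Fintype α] {p : α → Prop} {x : α} (hx : ¬ p x) :
    Nat.card {y // p y} < Nat.card α := by
  classical
  rw [Nat.card_eq_fintype_card, Nat.card_eq_fintype_card]
  exact Fintype.card_subtype_lt hx

lemma hom_all (H1 H2 : LGraph)
    (h : ∀ G : LGraph, GConnected G → homCount G H1 = homCount G H2) :
    ∀ G : LGraph, homCount G H1 = homCount G H2 := by
  suffices hs : ∀ n (G : LGraph), Nat.card G.V = n → homCount G H1 = homCount G H2 by
    exact fun G => hs _ G rfl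
  intro n
  induction n using Nat.strong_induction_on with
  | _ n ih =>
  intro G hn
  by_cases hGe : IsEmpty G.V
  · apply Nat.card_congr
    exact ⟨fun _ => ⟨fun v => (hGe.false v).elim, fun u _ _ => (hGe.false u).elim⟩,
      fun _ => ⟨fun v => (hGe.false v).elim, fun u _ _ => (hGe.false u).elim⟩,
      fun f => Subtype.ext (funext fun v => (hGe.false v).elim),
      fun f => Subtype.ext (funext fun v => (hGe.false v).elim)⟩
  · obtain ⟨v⟩ := not_isEmpty_iff.mp hGe
    set s : Set G.V := {u | Relation.ReflTransGen G.Adj v u} with hsdef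
    have hcl : ∀ a b, G.Adj a b → (a ∈ s ↔ b ∈ s) :=
      fun a b hab => ⟨fun ha => ha.tail hab, fun hb => hb.tail (G.symm _ _ hab)⟩
    by_cases hall : ∀ u, u ∈ s
    · apply h
      refine ⟨⟨v⟩, fun a b => Relation.ReflTransGen.trans
        ((@Relation.ReflTransGen.stdSymm _ _ ⟨fun x y hxy => G.symm x y hxy⟩).symm _ _ (hall a))
        (hall b)⟩
    · push_neg at hall
      obtain ⟨w, hw⟩ := hall
      rw [homCount_split G H1 s hcl, homCount_split G H2 s hcl]
      have c1 : Nat.card (induced G s).V < n :=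
        hn ▸ nat_card_subtype_lt (p := fun u => u ∈ s) hw
      have c2 : Nat.card (induced G sᶜ).V < n := by
        refine hn ▸ nat_card_subtype_lt (p := fun u => u ∈ sᶜ) (x := v) ?_
        simp only [Set.mem_compl_iff, not_not]
        exact Relation.ReflTransGen.refl
      rw [ih _ c1 _ rfl, ih _ c2 _ rfl]

lemma inj_all (H1 H2 : LGraph)
    (h : ∀ G : LGraph, homCount G H1 = homCount G H2) :
    ∀ G : LGraph, injCount G H1 = injCount G H2 := by
  suffices hs : ∀ n (G : LGraph), Nat.card G.V = n → injCount G H1 = injCount G H2 by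
    exact fun G => hs _ G rfl
  intro n
  induction n using Nat.strong_induction_on with
  | _ n ih =>
  intro G hn
  classical
  have key := (homCount_eq_sum G H1).symm.trans ((h G).trans (homCount_eq_sum G H2))
  have hmem : eqSetoid G.V ∈ (Finset.univ : Finset (Setoid G.V)) := Finset.mem_univ _
  rw [← Finset.add_sum_erase _ _ hmem, ← Finset.add_sum_erase _ _ hmem] at key
  have hrest : ∑ P ∈ Finset.univ.erase (eqSetoid G.V), injCount (quotG G P) H1
      = ∑ P ∈ Finset.univ.erase (eqSetoid G.V), injCount (quotG G P) H2 :=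
    Finset.sum_congr rfl fun P hP =>
      ih _ (hn ▸ card_quot_lt G P (Finset.ne_of_mem_erase hP)) _ rfl
  rw [hrest] at key
  have key2 := Nat.add_right_cancel key
  rw [injCount_quot_eq, injCount_quot_eq] at key2
  exact key2

theorem lovasz_connected (H1 H2 : LGraph)
    (h : ∀ G : LGraph, GConnected G → homCount G H1 = homCount G H2) :
    Iso H1 H2 := by
  have hall := hom_all H1 H2 h
  have hinj := inj_all H1 H2 hall
  haveI : Nonempty {f : H1.V → H1.V // H1.IsHom H1 f ∧ Function.Injective f} :=
    ⟨⟨id, fun u v hh => hh, fun a b hab => hab⟩⟩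
  haveI : Nonempty {f : H2.V → H2.V // H2.IsHom H2 f ∧ Function.Injective f} :=
    ⟨⟨id, fun u v hh => hh, fun a b hab => hab⟩⟩
  have h2 : 0 < injCount H1 H2 := by
    rw [← hinj H1]; exact Nat.card_pos
  have h4 : 0 < injCount H2 H1 := by
    rw [hinj H2]; exact Nat.card_pos
  obtain ⟨⟨f, hfhom, hfinj⟩⟩ := (Nat.card_pos_iff.mp h2).1
  obtain ⟨⟨g, hghom, hginj⟩⟩ := (Nat.card_pos_iff.mp h4).1
  have hcard : Nat.card H1.V = Nat.card H2.V :=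
    le_antisymm (Nat.card_le_card_of_injective f hfinj)
      (Nat.card_le_card_of_injective g hginj)
  have hfbij : Function.Bijective f :=
    (Fintype.bijective_iff_injective_and_card f).mpr ⟨hfinj, by
      rw [← Nat.card_eq_fintype_card, ← Nat.card_eq_fintype_card]; exact hcard⟩
  set p : H1.V → H1.V := g ∘ f with hpdef
  have hphom : H1.IsHom H1 p := fun u v hh => hghom _ _ (hfhom _ _ hh)
  have hpbij : Function.Bijective p :=
    Finite.injective_iff_bijective.mp (hginj.comp hfinj)
  let π : Equiv.Perm H1.V := Equiv.ofBijective p hpbij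
  have hiter : ∀ k, H1.IsHom H1 (p^[k]) := by
    intro k
    induction k with
    | zero => intro u v hh; simpa using hh
    | succ k ihk =>
      intro u v hh
      rw [Function.iterate_succ_apply, Function.iterate_succ_apply]
      exact ihk _ _ (hphom _ _ hh)
  have hπ : ∀ k x, (π ^ k) x = p^[k] x := by
    intro k
    induction k with
    | zero => intro x; rfl
    | succ k ihk =>
      intro x
      rw [pow_succ, Equiv.Perm.mul_apply, ihk]
      exact (Function.iterate_succ_apply p k x).symm
  set n := orderOf π with hndef
  have hn1 : 1 ≤ n := orderOf_pos π
  have hpn : ∀ x, p^[n] x = x := by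
    intro x
    rw [← hπ n x, pow_orderOf_eq_one]
    rfl
  set finv : H2.V → H1.V := p^[n-1] ∘ g with hfinvdef
  have hfinvhom : H2.IsHom H1 finv := fun u v hh => hiter (n-1) _ _ (hghom _ _ hh)
  have hleft : ∀ x, finv (f x) = x := by
    intro x
    show p^[n-1] (g (f x)) = x
    calc p^[n-1] (g (f x)) = p^[(n-1)+1] x := (Function.iterate_succ_apply p (n-1) x).symm
    _ = p^[n] x := by rw [Nat.sub_add_cancel hn1]
    _ = x := hpn x
  have hright : ∀ y, f (finv y) = y := by
    intro y
    obtain ⟨x, rfl⟩ := hfbij.2 y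
    rw [hleft x]
  refine ⟨⟨f, finv, hleft, hright⟩, fun u v => ⟨fun hh => hfhom u v hh, fun hh => ?_⟩⟩
  have h5 := hfinvhom (f u) (f v) hh
  rwa [hleft u, hleft v] at h5
end

section
/- Let A be a non-empty graph (i.e., having at least one edge) and B any graph, both possibly with loops. Then A^B is bipartite if and only if A is bipartite and B is not bipartite. -/
def WalkN (G : LGraph) (u v : G.V) (n : ℕ) : Prop :=
  ∃ w : ℕ → G.V, w 0 = u ∧ w n = v ∧ ∀ i < n, G.Adj (w i) (w (i+1))

lemma walkN_refl (G : LGraph) (u : G.V) : WalkN G u u 0 :=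
  ⟨fun _ => u, rfl, rfl, fun i hi => absurd hi (by omega)⟩

lemma walkN_edge {G : LGraph} {u v} (h : G.Adj u v) : WalkN G u v 1 :=
  ⟨fun i => if i = 0 then u else v, by simp, by simp, by
    intro i hi
    have : i = 0 := by omega
    simpa [this] using h⟩

lemma walkN_trans {G : LGraph} {u v x : G.V} {m n : ℕ}
    (h1 : WalkN G u v m) (h2 : WalkN G v x n) : WalkN G u x (m + n) := by
  obtain ⟨w1, hw10, hw1m, hw1⟩ := h1
  obtain ⟨w2, hw20, hw2n, hw2⟩ := h2
  refine ⟨fun i => if i ≤ m then w1 i else w2 (i - m), by simp [hw10], ?_, ?_⟩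
  · by_cases h : m + n ≤ m
    · have hn : n = 0 := by omega
      simp only [h, if_pos]
      rw [show m + n = m by omega, hw1m, ← hw20]
      exact hn ▸ hw2n
    · simp only [h, if_neg, not_false_iff]
      rw [show m + n - m = n by omega, hw2n]
  · intro i hi
    by_cases h1' : i + 1 ≤ m
    · have : i ≤ m := by omega
      simp only [this, h1', if_pos]
      exact hw1 i (by omega)
    · by_cases h2' : i ≤ m
      · have him : i = m := by omega
        simp only [h2', if_pos, h1', if_neg, not_false_iff]
        rw [him, hw1m, ← hw20, show m + 1 - m = 0 + 1 by omega]
        exact hw2 0 (by omega)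
      · simp only [h1', h2', if_neg, not_false_iff]
        rw [show i + 1 - m = (i - m) + 1 by omega]
        exact hw2 (i - m) (by omega)

lemma walkN_symm {G : LGraph} {u v : G.V} {n : ℕ} (h : WalkN G u v n) : WalkN G v u n := by
  obtain ⟨w, hw0, hwn, hw⟩ := h
  refine ⟨fun i => w (n - i), by simpa, by simpa, ?_⟩
  intro i hi
  show G.Adj (w (n - i)) (w (n - (i+1)))
  have h1 : n - i = (n - (i+1)) + 1 := by omega
  rw [h1]
  exact G.symm _ _ (hw (n - (i+1)) (by omega))

lemma exists_odd_closed_walk {G : LGraph} (h : ¬ IsBipartite G) :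
    ∃ v n, Odd n ∧ WalkN G v v n := by
  by_contra hc
  push_neg at hc
  apply h
  classical
  let conn : Setoid G.V := ⟨fun u v => ∃ n, WalkN G u v n,
    ⟨fun u => ⟨0, walkN_refl G u⟩,
     fun ⟨n, hn⟩ => ⟨n, walkN_symm hn⟩,
     fun ⟨m, hm⟩ ⟨n, hn⟩ => ⟨m + n, walkN_trans hm hn⟩⟩⟩
  let r : G.V → G.V := fun v => (Quotient.mk conn v).out
  have hr : ∀ v, ∃ n, WalkN G (r v) v n := fun v =>
    Quotient.exact (Quotient.out_eq (Quotient.mk conn v))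
  have noBoth : ∀ x y : G.V, ∀ m n, Even m → Odd n →
      WalkN G x y m → WalkN G x y n → False := by
    intro x y m n hm hn h1 h2
    exact hc x (m + n) (hm.add_odd hn) (walkN_trans h1 (walkN_symm h2))
  refine ⟨{ v | ∃ n, Odd n ∧ WalkN G (r v) v n }, ?_⟩
  intro u v huv
  have hru : r u = r v := by
    have : Quotient.mk conn u = Quotient.mk conn v :=
      Quotient.sound ⟨1, walkN_edge huv⟩
    simp only [r, this]
  constructor
  · rintro ⟨n, hn, hwn⟩ ⟨m, hm, hwm⟩
    rw [hru] at hwn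
    exact noBoth (r v) v (n+1) m (hn.add_one) hm
      (walkN_trans hwn (walkN_edge huv)) hwm
  · intro hv
    obtain ⟨n, hwn⟩ := hr u
    have hwv : WalkN G (r v) v (n + 1) := by
      rw [← hru]
      exact walkN_trans hwn (walkN_edge huv)
    rcases Nat.even_or_odd n with he | ho
    · exact absurd ⟨n + 1, he.add_one, hwv⟩ hv
    · exact ⟨n, ho, hwn⟩

theorem exp_bipartite_iff (A B : LGraph) (hA : ∃ u v, A.Adj u v) :
    IsBipartite (expG A B) ↔ (IsBipartite A ∧ ¬ IsBipartite B) := by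
  classical
  constructor
  · rintro ⟨S, hS⟩
    constructor
    · refine ⟨{a | (fun _ => a) ∈ S}, fun a b hab => ?_⟩
      exact hS (fun _ => a) (fun _ => b) (fun u v _ => hab)
    · rintro ⟨sB, hsB⟩
      obtain ⟨a, b, hab⟩ := hA
      set f : B.V → A.V := fun x => if x ∈ sB then a else b with hf
      have hff : (expG A B).Adj f f := by
        intro u v huv
        by_cases hu : u ∈ sB
        · have hv : v ∉ sB := (hsB u v huv).mp hu
          simp only [hf, if_pos hu, if_neg hv]
          exact hab
        · have hv : v ∈ sB := by
            by_contra hv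
            exact hu ((hsB u v huv).mpr hv)
          simp only [hf, if_neg hu, if_pos hv]
          exact A.symm _ _ hab
      have := hS f f hff
      tauto
  · rintro ⟨⟨sA, hsA⟩, hB⟩
    obtain ⟨v₀, n, hodd, w, hw0, hwn, hw⟩ := exists_odd_closed_walk hB
    set χ : A.V → ZMod 2 := fun a => if a ∈ sA then 1 else 0 with hχ
    have hχ_edge : ∀ x y : A.V, A.Adj x y → χ x + χ y = 1 := by
      intro x y hxy
      have := hsA x y hxy
      by_cases hx : x ∈ sA
      · have hy : y ∉ sA := this.mp hx
        simp [hχ, hx, hy]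
      · have hy : y ∈ sA := by tauto
        simp [hχ, hx, hy]
    set ε : (B.V → A.V) → ZMod 2 := fun f => ∑ i ∈ Finset.range n, χ (f (w i)) with hε
    have key : ∀ f g : B.V → A.V, (expG A B).Adj f g → ε f + ε g = 1 := by
      intro f g hfg
      have hshift : ∀ h : B.V → A.V,
          ∑ i ∈ Finset.range n, χ (h (w (i + 1))) = ε h := by
        intro h
        have h1 := Finset.sum_range_succ' (fun i => χ (h (w i))) n
        have h2 := Finset.sum_range_succ (fun i => χ (h (w i))) n
        have h3 : χ (h (w 0)) = χ (h (w n)) := by rw [hw0, hwn]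
        have := h1.symm.trans h2
        rw [hε]
        -- this : (∑ i ∈ range n, χ (h (w (i+1)))) + χ (h (w 0)) = (∑ i ∈ range n, χ (h (w i))) + χ (h (w n))
        rw [h3] at this
        exact add_right_cancel this
      have hsum : ∑ i ∈ Finset.range n, (χ (f (w i)) + χ (g (w (i + 1)))) = (n : ZMod 2) := by
        rw [Finset.sum_congr rfl (fun i hi => hχ_edge _ _ (hfg (w i) (w (i + 1))
          (hw i (Finset.mem_range.mp hi))))]
        simp
      have hn1 : (n : ZMod 2) = 1 := by
        obtain ⟨k, hk⟩ := hodd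
        subst hk
        push_cast
        ring_nf
        simp [show (2 : ZMod 2) = 0 from rfl]
      rw [Finset.sum_add_distrib, hshift g, hn1] at hsum
      rw [hε] at hsum ⊢
      exact hsum
    refine ⟨{f | ε f = 1}, fun f g hfg => ?_⟩
    have h1 : ∀ x y : ZMod 2, x + y = 1 → (x = 1 ↔ ¬ y = 1) := by decide
    exact h1 _ _ (key f g hfg)
end

section
/- The tensor product A × B of two graphs (possibly with loops) is bipartite if and only if at least one of A or B is bipartite. -/
/-- Walks of a given length. -/
def GWalk (G : LGraph) : ℕ → G.V → G.V → Prop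
  | 0, u, v => u = v
  | n+1, u, v => ∃ w, G.Adj u w ∧ GWalk G n w v

lemma gwalk_append (G : LGraph) :
    ∀ m n u v w, GWalk G m u v → GWalk G n v w → GWalk G (m + n) u w := by
  intro m
  induction m with
  | zero => intro n u v w h1 h2; cases h1; simpa using h2
  | succ m ih =>
    rintro n u v w ⟨z, hz, hzw⟩ h2
    rw [Nat.succ_add]
    exact ⟨z, hz, ih n z v w hzw h2⟩

lemma gwalk_symm (G : LGraph) :
    ∀ n u v, GWalk G n u v → GWalk G n v u := by
  intro n
  induction n with
  | zero => intro u v h; exact h.symm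
  | succ n ih =>
    rintro u v ⟨w, hw, hwv⟩
    have h1 : GWalk G n v w := ih w v hwv
    have h2 : GWalk G 1 w u := ⟨u, G.symm _ _ hw, rfl⟩
    exact gwalk_append G n 1 v w u h1 h2

lemma rtg_walk (G : LGraph) {u v : G.V} (h : Relation.ReflTransGen G.Adj u v) :
    ∃ n, GWalk G n u v := by
  induction h with
  | refl => exact ⟨0, rfl⟩
  | tail _ hadj ih =>
    obtain ⟨n, hn⟩ := ih
    exact ⟨n + 1, gwalk_append G n 1 _ _ _ hn ⟨_, hadj, rfl⟩⟩

lemma walk_parity (G : LGraph) (s : Set G.V)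
    (hs : ∀ u v, G.Adj u v → (u ∈ s ↔ v ∉ s)) :
    ∀ n u v, GWalk G n u v →
      (Even n → (u ∈ s ↔ v ∈ s)) ∧ (¬ Even n → (u ∈ s ↔ v ∉ s)) := by
  intro n
  induction n with
  | zero => intro u v h; cases h; simp
  | succ n ih =>
    rintro u v ⟨w, hw, hwv⟩
    have huv := hs u w hw
    have h2 := ih w v hwv
    rw [Nat.even_add_one]
    tauto

/-- Local setoid: connected components. -/
noncomputable def compSetoid (G : LGraph) : Setoid G.V :=
  ⟨Relation.ReflTransGen G.Adj,
   ⟨fun _ => Relation.ReflTransGen.refl,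
    fun h => by
      induction h with
      | refl => exact Relation.ReflTransGen.refl
      | tail _ hadj ih =>
        exact Relation.ReflTransGen.head (G.symm _ _ hadj) ih,
    fun h1 h2 => h1.trans h2⟩⟩

lemma nonbip_odd_closed (G : LGraph) (h : ¬ IsBipartite G) :
    ∃ a k, GWalk G (2 * k + 1) a a := by
  by_contra h'
  push_neg at h'
  apply h
  classical
  let st := compSetoid G
  let rep : G.V → G.V := fun v => (Quotient.mk st v).out
  refine ⟨{v | ∃ n, ¬ Even n ∧ GWalk G n (rep v) v}, ?_⟩
  intro u v huv
  have hrep : rep u = rep v := by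
    have : (Quotient.mk st u) = (Quotient.mk st v) :=
      Quotient.sound (Relation.ReflTransGen.single huv)
    simp only [rep, this]
  have hconn : Relation.ReflTransGen G.Adj (rep u) u :=
    Quotient.exact ((Quotient.mk st u).out_eq)
  obtain ⟨m, hm⟩ := rtg_walk G hconn
  have fact1 : (∃ n, ¬ Even n ∧ GWalk G n (rep u) u) →
      (∃ n, ¬ Even n ∧ GWalk G n (rep v) v) → False := by
    rintro ⟨n, hn, hwu⟩ ⟨m', hm', hwv⟩
    have hwv' : GWalk G m' (rep u) v := by rw [hrep]; exact hwv
    have w1 : GWalk G n u (rep u) := gwalk_symm G n _ _ hwu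
    have w2 : GWalk G (n + m') u v := gwalk_append G n m' u (rep u) v w1 hwv'
    have w3 : GWalk G (n + m' + 1) u u :=
      gwalk_append G (n + m') 1 u v u w2 ⟨u, G.symm _ _ huv, rfl⟩
    have hex : ∃ k, n + m' + 1 = 2 * k + 1 := by
      rw [Nat.not_even_iff] at hn hm'
      exact ⟨(n + m') / 2, by omega⟩
    obtain ⟨k, hk⟩ := hex
    exact h' u k (hk ▸ w3)
  have fact2 : ¬ (∃ n, ¬ Even n ∧ GWalk G n (rep v) v) →
      (∃ n, ¬ Even n ∧ GWalk G n (rep u) u) := by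
    intro hv
    by_cases he : Even m
    · exfalso
      apply hv
      refine ⟨m + 1, by simp [Nat.even_add_one, he], ?_⟩
      rw [← hrep]
      exact gwalk_append G m 1 (rep u) u v hm ⟨v, huv, rfl⟩
    · exact ⟨m, he, hm⟩
  exact ⟨fun hu hv => fact1 hu hv, fun hv => fact2 hv⟩

lemma tensor_walk (A B : LGraph) :
    ∀ n (a a' : A.V) (b b' : B.V), GWalk A n a a' → B.Adj b b' →
      GWalk (tensor A B) n (a, b) (a', if Even n then b else b') := by
  intro n
  induction n with
  | zero => intro a a' b b' h _; cases h; simp [GWalk]; rfl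
  | succ n ih =>
    rintro a a' b b' ⟨w, hw, hwa'⟩ hb
    refine ⟨(w, b'), ⟨hw, hb⟩, ?_⟩
    have := ih w a' b' b hwa' (B.symm _ _ hb)
    by_cases he : Even n
    · simpa [he, Nat.even_add_one] using this
    · simpa [he, Nat.even_add_one] using this

theorem tensor_bipartite_iff (A B : LGraph) :
    IsBipartite (tensor A B) ↔ (IsBipartite A ∨ IsBipartite B) := by
  constructor
  · rintro ⟨s, hs⟩
    by_cases hA : IsBipartite A
    · exact Or.inl hA
    · right
      obtain ⟨a, k, hw⟩ := nonbip_odd_closed A hA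
      refine ⟨{b | (a, b) ∈ s}, ?_⟩
      intro b b' hbb
      have hodd : ¬ Even (2 * k + 1) := by
        simp [Nat.even_add_one, Nat.even_mul]
      have hw' := tensor_walk A B (2 * k + 1) a a b b' hw hbb
      rw [if_neg hodd] at hw'
      exact (walk_parity (tensor A B) s hs (2 * k + 1) _ _ hw').2 hodd
  · rintro (⟨s, hs⟩ | ⟨s, hs⟩)
    · exact ⟨{p | p.1 ∈ s}, fun u v h => hs _ _ h.1⟩
    · exact ⟨{p | p.2 ∈ s}, fun u v h => hs _ _ h.2⟩
end

section
/- If H is bipartite reducible and A is an arbitrary graph (possibly with loops), then the exponential graph H^A is bipartite reducible. -/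
lemma homCount_congr (G₁ G₂ H : LGraph) (e : G₁.V ≃ G₂.V)
    (he : ∀ u v, G₁.Adj u v ↔ G₂.Adj (e u) (e v)) :
    homCount G₁ H = homCount G₂ H := by
  apply Nat.card_congr
  refine ⟨fun f => ⟨f.1 ∘ e.symm, ?_⟩, fun g => ⟨g.1 ∘ e, ?_⟩, ?_, ?_⟩
  · intro u v h
    exact f.2 _ _ ((he (e.symm u) (e.symm v)).2 (by simpa using h))
  · intro u v h
    exact g.2 _ _ ((he u v).1 h)
  · intro f; ext x; simp
  · intro g; ext x; simp

lemma homCount_curry (G A H : LGraph) :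
    homCount G (expG H A) = homCount (tensor G A) H := by
  apply Nat.card_congr
  refine ⟨fun f => ⟨fun p => f.1 p.1 p.2, ?_⟩, fun g => ⟨fun u a => g.1 (u, a), ?_⟩, ?_, ?_⟩
  · rintro ⟨u, a⟩ ⟨v, b⟩ ⟨h1, h2⟩
    exact f.2 u v h1 a b h2
  · intro u v h a b hab
    exact g.2 (u, a) (v, b) ⟨h, hab⟩
  · intro f; rfl
  · intro g; rfl

theorem bipRed_exp (H : LGraph) (hH : BipRed H) (A : LGraph) :
    BipRed (expG H A) := by
  intro G
  rw [homCount_curry, homCount_curry]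
  have hiso : homCount (tensor (tensor G (completeG 2)) A) H
      = homCount (tensor (tensor G A) (completeG 2)) H := by
    apply homCount_congr
    case e => exact ⟨fun p => ((p.1.1, p.2), p.1.2), fun p => ((p.1.1, p.2), p.1.2),
      fun p => rfl, fun p => rfl⟩
    rintro ⟨⟨u, i⟩, a⟩ ⟨⟨v, j⟩, b⟩
    constructor
    · rintro ⟨⟨h1, h2⟩, h3⟩; exact ⟨⟨h1, h3⟩, h2⟩
    · rintro ⟨⟨h1, h3⟩, h2⟩; exact ⟨⟨h1, h2⟩, h3⟩
  rw [hiso]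
  exact hH (tensor G A)
end

section
/- If B is a bipartite graph, then for every graph H (possibly with loops), the exponential graph H^B is bipartite reducible; moreover for all G one has equality hom(G, H^B)^2 = hom(G × K2, H^B). -/
open Classical in
/-- Mix two functions according to the `Fin 2` index and bipartition `s`. -/
noncomputable def fwdFun {VG VB VH : Type} (s : Set VB)
    (f0 f1 : VG → VB → VH) (x : VG × Fin 2) (u : VB) : VH :=
  if (x.2 = 0 ↔ u ∈ s) then f0 x.1 u else f1 x.1 u

open Classical in
/-- Unmix a function on `VG × Fin 2` according to the bipartition `s`. -/
noncomputable def bwdFun {VG VB VH : Type} (s : Set VB) (i j : Fin 2)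
    (f : VG × Fin 2 → VB → VH) (g : VG) (u : VB) : VH :=
  if u ∈ s then f (g, i) u else f (g, j) u

open Classical in
theorem fwdFun_apply {VG VB VH : Type} (s : Set VB)
    (f0 f1 : VG → VB → VH) (g : VG) (i : Fin 2) (u : VB) :
    fwdFun s f0 f1 (g, i) u
      = if (i = 0 ↔ u ∈ s) then f0 g u else f1 g u := rfl

open Classical in
theorem bwdFun_apply {VG VB VH : Type} (s : Set VB) (i j : Fin 2)
    (f : VG × Fin 2 → VB → VH) (g : VG) (u : VB) :
    bwdFun s i j f g u = if u ∈ s then f (g, i) u else f (g, j) u := rfl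

theorem bipRed_exp_bipartite (H B : LGraph) (hB : IsBipartite B) :
    BipRed (expG H B) ∧
    ∀ G : LGraph, homCount G (expG H B) ^ 2
      = homCount (tensor G (completeG 2)) (expG H B) := by
  classical
  obtain ⟨s, hs⟩ := hB
  have fin2 : ∀ i j : Fin 2, i ≠ j → (i = 0 ∧ j = 1) ∨ (i = 1 ∧ j = 0) := by decide
  have fin2' : ∀ i : Fin 2, i = 0 ∨ i = 1 := by decide
  have h10 : (1 : Fin 2) ≠ 0 := by decide
  have h01 : (0 : Fin 2) ≠ 1 := by decide
  have key : ∀ G : LGraph, homCount G (expG H B) ^ 2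
      = homCount (tensor G (completeG 2)) (expG H B) := by
    intro G
    set HB := expG H B with hHB
    set T := tensor G (completeG 2) with hT
    -- forward map
    let F : ({f : G.V → HB.V // G.IsHom HB f} × {f : G.V → HB.V // G.IsHom HB f}) →
        {f : T.V → HB.V // T.IsHom HB f} := fun p =>
      ⟨fwdFun s p.1.1 p.2.1, by
        rintro ⟨g, i⟩ ⟨g', j⟩ ⟨hG, hK⟩ u v huv
        have hsv := hs u v huv
        erw [fwdFun_apply, fwdFun_apply]
        rcases fin2 i j hK with ⟨hx, hy⟩ | ⟨hx, hy⟩ <;> subst hx <;> subst hy <;>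
            by_cases hu : u ∈ s
        · have hv : v ∉ s := hsv.mp hu
          rw [if_pos (iff_of_true rfl hu), if_pos (iff_of_false h10 hv)]
          exact p.1.2 g g' hG u v huv
        · have hv : v ∈ s := by by_contra h; exact hu (hsv.mpr h)
          rw [if_neg (fun h => hu (h.mp rfl)), if_neg (fun h => h10 (h.mpr hv))]
          exact p.2.2 g g' hG u v huv
        · have hv : v ∉ s := hsv.mp hu
          rw [if_neg (fun h => h10 (h.mpr hu)), if_neg (fun h => hv (h.mp rfl))]
          exact p.2.2 g g' hG u v huv
        · have hv : v ∈ s := by by_contra h; exact hu (hsv.mpr h)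
          rw [if_pos (iff_of_false h10 hu), if_pos (iff_of_true rfl hv)]
          exact p.1.2 g g' hG u v huv⟩
    -- backward map
    let Ginv : {f : T.V → HB.V // T.IsHom HB f} →
        ({f : G.V → HB.V // G.IsHom HB f} × {f : G.V → HB.V // G.IsHom HB f}) := fun φ =>
      (⟨bwdFun s 0 1 φ.1, by
        intro g g' hG u v huv
        have hsv := hs u v huv
        erw [bwdFun_apply, bwdFun_apply]
        by_cases hu : u ∈ s
        · have hv : v ∉ s := hsv.mp hu
          rw [if_pos hu, if_neg hv]
          exact φ.2 (g, (0 : Fin 2)) (g', (1 : Fin 2)) ⟨hG, h01⟩ u v huv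
        · have hv : v ∈ s := by by_contra h; exact hu (hsv.mpr h)
          rw [if_neg hu, if_pos hv]
          exact φ.2 (g, (1 : Fin 2)) (g', (0 : Fin 2)) ⟨hG, h10⟩ u v huv⟩,
       ⟨bwdFun s 1 0 φ.1, by
        intro g g' hG u v huv
        have hsv := hs u v huv
        erw [bwdFun_apply, bwdFun_apply]
        by_cases hu : u ∈ s
        · have hv : v ∉ s := hsv.mp hu
          rw [if_pos hu, if_neg hv]
          exact φ.2 (g, (1 : Fin 2)) (g', (0 : Fin 2)) ⟨hG, h10⟩ u v huv
        · have hv : v ∈ s := by by_contra h; exact hu (hsv.mpr h)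
          rw [if_neg hu, if_pos hv]
          exact φ.2 (g, (0 : Fin 2)) (g', (1 : Fin 2)) ⟨hG, h01⟩ u v huv⟩)
    have left_inv : ∀ p, Ginv (F p) = p := by
      rintro ⟨⟨f0, h0⟩, ⟨f1, h1⟩⟩
      refine Prod.ext (Subtype.ext ?_) (Subtype.ext ?_) <;> funext g u
      · show bwdFun s 0 1 (fwdFun s f0 f1) g u = f0 g u
        rw [bwdFun_apply]
        by_cases hu : u ∈ s
        · erw [if_pos hu, fwdFun_apply, if_pos (iff_of_true rfl hu)]
        · erw [if_neg hu, fwdFun_apply, if_pos (iff_of_false h10 hu)]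
      · show bwdFun s 1 0 (fwdFun s f0 f1) g u = f1 g u
        rw [bwdFun_apply]
        by_cases hu : u ∈ s
        · erw [if_pos hu, fwdFun_apply, if_neg (fun h => h10 (h.mpr hu))]
        · erw [if_neg hu, fwdFun_apply, if_neg (fun h => hu (h.mp rfl))]
    have right_inv : ∀ φ, F (Ginv φ) = φ := by
      rintro ⟨f, hf⟩
      refine Subtype.ext ?_
      funext x u
      obtain ⟨g, i⟩ := x
      show fwdFun s (bwdFun s 0 1 f) (bwdFun s 1 0 f) (g, i) u = f (g, i) u
      erw [fwdFun_apply]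
      rcases fin2' i with hi | hi <;> subst hi <;> by_cases hu : u ∈ s
      · erw [if_pos (iff_of_true rfl hu), bwdFun_apply, if_pos hu]; rfl
      · erw [if_neg (fun h => hu (h.mp rfl)), bwdFun_apply, if_neg hu]; rfl
      · erw [if_neg (fun h => h10 (h.mpr hu)), bwdFun_apply, if_pos hu]; rfl
      · erw [if_pos (iff_of_false h10 hu), bwdFun_apply, if_neg hu]; rfl
    have e : ({f : G.V → HB.V // G.IsHom HB f} × {f : G.V → HB.V // G.IsHom HB f}) ≃
        {f : T.V → HB.V // T.IsHom HB f} := ⟨F, Ginv, left_inv, right_inv⟩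
    have hc := Nat.card_congr e
    rw [Nat.card_prod] at hc
    simpa [homCount, sq] using hc
  exact ⟨fun G => (key G).le, key⟩
end

section
/- Assume the Galvin–Tetali theorem: for every d-regular bipartite graph G on n vertices and every graph H, hom(G,H) ≤ hom(K_{d,d}, H)^{n/(2d)}. Then for every bipartite reducible graph H and every d-regular graph G on n vertices (not necessarily bipartite), hom(G,H) ≤ hom(K_{d,d}, H)^{n/(2d)}. -/
theorem bipRed_implies_Kdd_bound
    (galvinTetali : ∀ (D m : ℕ) (G' H' : LGraph), GRegular G' D → IsBipartite G' →
      Fintype.card G'.V = m → homCount G' H' ^ (2 * D) ≤ homCount (compBip D) H' ^ m)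
    (H : LGraph) (hH : BipRed H) (d n : ℕ) (G : LGraph)
    (hreg : GRegular G d) (hn : Fintype.card G.V = n) :
    homCount G H ^ (2 * d) ≤ homCount (compBip d) H ^ n := by
  set G' := tensor G (completeG 2) with hG'
  have hreg' : GRegular G' d := by
    intro v
    have e : {u : G'.V // G'.Adj v u} ≃ {w : G.V // G.Adj v.1 w} × {j : Fin 2 // v.2 ≠ j} :=
      { toFun := fun u => (⟨u.1.1, u.2.1⟩, ⟨u.1.2, u.2.2⟩)
        invFun := fun p => ⟨(p.1.1, p.2.1), p.1.2, p.2.2⟩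
        left_inv := fun u => rfl
        right_inv := fun p => rfl }
    rw [Nat.card_congr e, Nat.card_prod, hreg v.1]
    have h2 : Nat.card {j : Fin 2 // v.2 ≠ j} = 1 := by
      rcases Fin.exists_fin_two.mp ⟨v.2, rfl⟩ with h | h <;>
        · rw [h] at *
          change Nat.card {j : Fin 2 // (_ : Fin 2) ≠ j} = 1
          rw [Nat.card_eq_fintype_card]
          decide
    rw [h2, Nat.mul_one]
  have hbip : IsBipartite G' := by
    refine ⟨{p | (show Fin 2 from p.2) = 0}, ?_⟩
    intro u v h
    have h2 : u.2 ≠ v.2 := h.2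
    constructor
    · intro hu hv
      exact h2 (hu.trans hv.symm)
    · intro hv
      rcases Fin.exists_fin_two.mp ⟨u.2, rfl⟩ with h | h
      · exact h
      · rcases Fin.exists_fin_two.mp ⟨v.2, rfl⟩ with h' | h'
        · exact absurd h' hv
        · exact absurd (h.trans h'.symm) h2
  have hcard : Fintype.card G'.V = 2 * n := by
    show Fintype.card (G.V × Fin 2) = 2 * n
    rw [Fintype.card_prod, hn, Fintype.card_fin]
    ring
  have hgt := galvinTetali d (2 * n) G' H hreg' hbip hcard
  have key : homCount G' H ^ d ≤ homCount (compBip d) H ^ n := by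
    have h1 : (homCount G' H ^ d) ^ 2 ≤ (homCount (compBip d) H ^ n) ^ 2 := by
      calc (homCount G' H ^ d) ^ 2 = homCount G' H ^ (2 * d) := by ring
      _ ≤ homCount (compBip d) H ^ (2 * n) := hgt
      _ = (homCount (compBip d) H ^ n) ^ 2 := by ring
    exact Nat.pow_le_pow_iff_left (n := 2) (by norm_num) |>.mp h1
  calc homCount G H ^ (2 * d) = (homCount G H ^ 2) ^ d := by ring
  _ ≤ homCount G' H ^ d := Nat.pow_le_pow_left (hH G) d
  _ ≤ homCount (compBip d) H ^ n := key
end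

section
/- Fix d ≥ 1. Let H be a loop-free graph with no clique of size d+1, and let G be a connected d-regular loop-free graph on n < 2d vertices with hom(G,H) > 0. Then there exists a natural number k such that hom(G, kH) > hom(K_{d+1}, kH)^{n/(d+1)} and hom(G, kH) > hom(K_{d,d}, kH)^{n/(2d)}, where kH denotes the disjoint union of k copies of H. -/
lemma hom_complete_zero (d k : ℕ) (H : LGraph) (hHloop : LoopFree H)
    (hHclique : CliqueFree H (d + 1)) :
    homCount (completeG (d + 1)) (kCopies k H) = 0 := by
  have hempty : IsEmpty {f : (completeG (d+1)).V → (kCopies k H).V //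
      (completeG (d+1)).IsHom (kCopies k H) f} := by
    constructor
    rintro ⟨f, hf⟩
    apply hHclique
    refine ⟨fun i => (f i).2, ?_, ?_⟩
    · intro i j hij
      by_contra hne
      have h := (hf i j hne).2
      simp only at hij
      rw [hij] at h
      exact hHloop _ h
    · intro i j hij
      exact (hf i j hij).2
  exact Nat.card_of_isEmpty

lemma hom_kCopies_ge (k : ℕ) (G H : LGraph) (hne : Nonempty G.V) :
    k * homCount G H ≤ homCount G (kCopies k H) := by
  have hinj : Function.Injective
      (fun p : Fin k × {f : G.V → H.V // G.IsHom H f} =>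
        (⟨fun v => (p.1, p.2.1 v), fun u v h => ⟨rfl, p.2.2 u v h⟩⟩ :
          {f : G.V → (kCopies k H).V // G.IsHom (kCopies k H) f})) := by
    rintro ⟨i, f, hf⟩ ⟨j, g, hg⟩ h
    simp only [Subtype.mk.injEq] at h
    obtain ⟨v0⟩ := hne
    have h1 : i = j := congrArg Prod.fst (congrFun (congrArg Subtype.val h) v0 :)
    have h2 : f = g := funext fun v => congrArg Prod.snd (congrFun (congrArg Subtype.val h) v :)
    subst h1; subst h2; rfl
  have := Nat.card_le_card_of_injective _ hinj
  simpa only [homCount, Nat.card_prod, Nat.card_eq_fintype_card, Fintype.card_fin]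
    using this

lemma hom_compBip_le (d k : ℕ) (hd : 1 ≤ d) (H : LGraph) :
    homCount (compBip d) (kCopies k H) ≤ k * homCount (compBip d) H := by
  set z : Fin d := ⟨0, hd⟩ with hz
  have key : ∀ f : (compBip d).V → (kCopies k H).V,
      (compBip d).IsHom (kCopies k H) f → ∀ v, (f v).1 = (f (Sum.inl z)).1 := by
    intro f hf v
    have hlr : ∀ i j : Fin d, (compBip d).Adj (Sum.inl i) (Sum.inr j) := by
      intro i j; simp [compBip]
    cases v with
    | inl i =>
        have h1 := (hf (Sum.inl i) (Sum.inr z) (hlr i z)).1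
        have h2 := (hf (Sum.inl z) (Sum.inr z) (hlr z z)).1
        rw [h1, h2]
    | inr j =>
        exact ((hf (Sum.inl z) (Sum.inr j) (hlr z j)).1).symm
  have hinj : Function.Injective
      (fun f : {f : (compBip d).V → (kCopies k H).V //
          (compBip d).IsHom (kCopies k H) f} =>
        ((f.1 (Sum.inl z)).1,
          (⟨fun v => (f.1 v).2, fun u v h => (f.2 u v h).2⟩ :
            {g : (compBip d).V → H.V // (compBip d).IsHom H g}))) := by
    rintro ⟨f, hf⟩ ⟨g, hg⟩ h
    simp only [Prod.mk.injEq, Subtype.mk.injEq] at h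
    obtain ⟨h1, h2⟩ := h
    have : f = g := by
      funext v
      have e1 : (f v).1 = (g v).1 := by
        rw [key f hf v, key g hg v, h1]
      have e2 : (f v).2 = (g v).2 := (congrFun (congrArg Subtype.val h2) v :)
      exact Prod.ext e1 e2
    subst this; rfl
  have := Nat.card_le_card_of_injective _ hinj
  simpa only [homCount, Nat.card_prod, Nat.card_eq_fintype_card, Fintype.card_fin]
    using this

theorem counterexample_family (d n : ℕ) (hd : 1 ≤ d) (H G : LGraph)
    (hHloop : LoopFree H) (hHclique : CliqueFree H (d + 1))
    (hGconn : GConnected G) (hGloop : LoopFree G) (hGreg : GRegular G d)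
    (hGn : Fintype.card G.V = n) (hn : n < 2 * d) (hpos : 0 < homCount G H) :
    ∃ k : ℕ,
      homCount G (kCopies k H) ^ (d + 1) >
        homCount (completeG (d + 1)) (kCopies k H) ^ n ∧
      homCount G (kCopies k H) ^ (2 * d) >
        homCount (compBip d) (kCopies k H) ^ n := by
  obtain ⟨hne, _⟩ := hGconn
  have hn1 : 1 ≤ n := by
    subst hGn
    exact Fintype.card_pos
  set b := homCount (compBip d) H with hb
  set k := b ^ n + 1 with hk
  have hk1 : 1 ≤ k := Nat.le_add_left 1 _
  have hA : k ≤ homCount G (kCopies k H) := by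
    calc k = k * 1 := (Nat.mul_one k).symm
    _ ≤ k * homCount G H := Nat.mul_le_mul_left k hpos
    _ ≤ homCount G (kCopies k H) := hom_kCopies_ge k G H hne
  have hApos : 0 < homCount G (kCopies k H) := lt_of_lt_of_le hk1 hA
  refine ⟨k, ?_, ?_⟩
  · rw [hom_complete_zero d k H hHloop hHclique, Nat.zero_pow (by omega)]
    exact Nat.pow_pos hApos
  · have hB : homCount (compBip d) (kCopies k H) ≤ k * b :=
      hom_compBip_le d k hd H
    calc homCount (compBip d) (kCopies k H) ^ n
        ≤ (k * b) ^ n := Nat.pow_le_pow_left hB n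
      _ = k ^ n * b ^ n := mul_pow k b n
      _ < k ^ n * k := by
          have hkn : 0 < k ^ n := Nat.pow_pos hk1
          have : b ^ n < k := by omega
          exact Nat.mul_lt_mul_of_pos_left this hkn
      _ = k ^ (n + 1) := (pow_succ k n).symm
      _ ≤ k ^ (2 * d) := Nat.pow_le_pow_right hk1 (by omega)
      _ ≤ homCount G (kCopies k H) ^ (2 * d) := Nat.pow_le_pow_left hA _
end
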